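/- O'Neil's inequality in Lorentz spaces: if 1/p = 1/p₁ + 1/p₂ and 1/q = 1/q₁ + 1/q₂ with 1 ≤ p, p₁, p₂, q, q₁, q₂ ≤ ∞, then for f ∈ L^{p₁,q₁} and g ∈ L^{p₂,q₂} on a σ-finite measure space, the product fg lies in L^{p,q} with ‖fg‖_{L^{p,q}} ≤ C ‖f‖_{L^{p₁,q₁}} ‖g‖_{L^{p₂,q₂}}. -/

import Mathlib

open MeasureTheory
open scoped ENNReal

/-- Distribution function `s ↦ μ{|f| > s}`. -/
noncomputable def distFn {α : Type*} [MeasurableSpace α] (μ : Measure α) (f : α → ℝ)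
    (s : ℝ≥0∞) : ℝ≥0∞ :=
  μ {x | s < ENNReal.ofReal |f x|}

/-- Decreasing rearrangement `f*(t) = inf {s ≥ 0 : μ{|f| > s} ≤ t}`. -/
noncomputable def decRearr {α : Type*} [MeasurableSpace α] (μ : Measure α) (f : α → ℝ)
    (t : ℝ) : ℝ≥0∞ :=
  sInf {s : ℝ≥0∞ | distFn μ f s ≤ ENNReal.ofReal t}

/-- Lorentz quasinorm `‖f‖_{L^{p,q}} = (∫_0^∞ (t^{1/p} f*(t))^q dt/t)^{1/q}`
(with the supremum when `q = ∞`). -/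
noncomputable def lorentzNorm {α : Type*} [MeasurableSpace α] (μ : Measure α) (f : α → ℝ)
    (p q : ℝ≥0∞) : ℝ≥0∞ :=
  if q = ∞ then ⨆ t ∈ Set.Ioi (0 : ℝ), ENNReal.ofReal (t ^ p.toReal⁻¹) * decRearr μ f t
  else (∫⁻ t in Set.Ioi (0 : ℝ),
      (ENNReal.ofReal (t ^ p.toReal⁻¹) * decRearr μ f t) ^ q.toReal /
        ENNReal.ofReal t) ^ q.toReal⁻¹

section aux
variable {α : Type*} [MeasurableSpace α] (μ : Measure α)

lemma decRearr_anti (f : α → ℝ) : Antitone (decRearr μ f) := fun t t' h =>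
  sInf_le_sInf fun s hs => le_trans hs (ENNReal.ofReal_le_ofReal h)

lemma decRearr_measurable (f : α → ℝ) : Measurable (decRearr μ f) :=
  (decRearr_anti μ f).measurable

lemma distFn_decRearr_le (f : α → ℝ) (t : ℝ) :
    distFn μ f (decRearr μ f t) ≤ ENNReal.ofReal t := by
  set S := {s : ℝ≥0∞ | distFn μ f s ≤ ENNReal.ofReal t} with hS
  set a := sInf S with ha
  rcases eq_or_ne a ∞ with h | h
  · have htop : (∞ : ℝ≥0∞) ∈ S := by
      have : {x | (∞:ℝ≥0∞) < ENNReal.ofReal |f x|} = ∅ := by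
        ext x; simp [(ENNReal.ofReal_lt_top (r := |f x|)).not_gt]
      simp only [hS, Set.mem_setOf_eq, distFn, this, measure_empty]
      exact zero_le
    show distFn μ f a ≤ _
    rw [h]; exact htop
  · have hlt : ∀ n : ℕ, sInf S < a + ((n : ℝ≥0∞))⁻¹ := by
      intro n
      refine ENNReal.lt_add_right h ?_
      simp [ENNReal.inv_ne_zero]
    choose s hsS hslt using fun n => sInf_lt_iff.mp (hlt n)
    have hsub : {x | a < ENNReal.ofReal |f x|} ⊆
        ⋃ n, {x | s n < ENNReal.ofReal |f x|} := by
      intro x hx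
      simp only [Set.mem_setOf_eq] at hx
      have hy : ENNReal.ofReal |f x| ≠ ∞ := ENNReal.ofReal_ne_top
      have hpos : ENNReal.ofReal |f x| - a ≠ 0 := by
        simpa [tsub_eq_zero_iff_le] using hx.not_ge
      obtain ⟨n, hn⟩ := ENNReal.exists_inv_nat_lt hpos
      refine Set.mem_iUnion.2 ⟨n, ?_⟩
      have : a + ((n : ℝ≥0∞))⁻¹ ≤ ENNReal.ofReal |f x| := by
        calc a + ((n : ℝ≥0∞))⁻¹ ≤ a + (ENNReal.ofReal |f x| - a) := by
              exact add_le_add le_rfl hn.le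
          _ = ENNReal.ofReal |f x| := add_tsub_cancel_of_le hx.le
      exact lt_of_lt_of_le (hslt n) this
    have hdir : Directed (· ⊆ ·) (fun n => {x | s n < ENNReal.ofReal |f x|}) := by
      intro m n
      rcases le_total (s m) (s n) with h' | h'
      · exact ⟨m, subset_rfl, fun x hx => lt_of_le_of_lt h' hx⟩
      · exact ⟨n, fun x hx => lt_of_le_of_lt h' hx, subset_rfl⟩
    calc distFn μ f a ≤ μ (⋃ n, {x | s n < ENNReal.ofReal |f x|}) := measure_mono hsub
      _ = ⨆ n, μ {x | s n < ENNReal.ofReal |f x|} := hdir.measure_iUnion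
      _ ≤ ENNReal.ofReal t := iSup_le fun n => hsS n

lemma decRearr_mul_le (f g : α → ℝ) {t₁ t₂ : ℝ} (h₁ : 0 ≤ t₁) (h₂ : 0 ≤ t₂) :
    decRearr μ (fun x => f x * g x) (t₁ + t₂) ≤ decRearr μ f t₁ * decRearr μ g t₂ := by
  apply sInf_le
  show distFn μ (fun x => f x * g x) (decRearr μ f t₁ * decRearr μ g t₂) ≤
      ENNReal.ofReal (t₁ + t₂)
  have hsub : {x | decRearr μ f t₁ * decRearr μ g t₂ < ENNReal.ofReal |f x * g x|} ⊆
      {x | decRearr μ f t₁ < ENNReal.ofReal |f x|} ∪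
        {x | decRearr μ g t₂ < ENNReal.ofReal |g x|} := by
    intro x hx
    by_contra hc
    simp only [Set.mem_union, Set.mem_setOf_eq, not_or, not_lt] at hc
    simp only [Set.mem_setOf_eq] at hx
    have : ENNReal.ofReal |f x * g x| ≤ decRearr μ f t₁ * decRearr μ g t₂ := by
      rw [abs_mul, ENNReal.ofReal_mul (abs_nonneg _)]
      exact mul_le_mul' hc.1 hc.2
    exact hx.not_ge this
  calc distFn μ (fun x => f x * g x) (decRearr μ f t₁ * decRearr μ g t₂)
      ≤ μ ({x | decRearr μ f t₁ < ENNReal.ofReal |f x|} ∪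
        {x | decRearr μ g t₂ < ENNReal.ofReal |g x|}) := measure_mono hsub
    _ ≤ distFn μ f (decRearr μ f t₁) + distFn μ g (decRearr μ g t₂) := measure_union_le _ _
    _ ≤ ENNReal.ofReal t₁ + ENNReal.ofReal t₂ :=
        add_le_add (distFn_decRearr_le μ f t₁) (distFn_decRearr_le μ g t₂)
    _ = ENNReal.ofReal (t₁ + t₂) := (ENNReal.ofReal_add h₁ h₂).symm

end aux

lemma lintegral_Ioi_scale {c : ℝ} (hc : 0 < c) (K : ℝ → ℝ≥0∞) (hK : Measurable K) :
    ∫⁻ t in Set.Ioi (0:ℝ), K (c*t) = ENNReal.ofReal c⁻¹ * ∫⁻ u in Set.Ioi (0:ℝ), K u := by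
  have hmeas : Measurable fun t : ℝ => c * t := measurable_const_mul c
  have hpre : (fun t : ℝ => c * t) ⁻¹' Set.Ioi 0 = Set.Ioi 0 := by
    ext x; simp [Set.mem_Ioi, mul_pos_iff_of_pos_left, hc]
  calc ∫⁻ t in Set.Ioi (0:ℝ), K (c*t)
      = ∫⁻ y, K y ∂(Measure.map (fun t => c*t) (volume.restrict (Set.Ioi 0))) :=
        (lintegral_map hK hmeas).symm
    _ = ∫⁻ y, K y ∂((volume.map (fun t => c*t)).restrict (Set.Ioi 0)) := by
        rw [Measure.restrict_map hmeas measurableSet_Ioi, hpre]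
    _ = ∫⁻ y, K y ∂((ENNReal.ofReal |c⁻¹| • volume).restrict (Set.Ioi 0)) := by
        rw [Real.map_volume_mul_left hc.ne']
    _ = ENNReal.ofReal c⁻¹ * ∫⁻ u in Set.Ioi (0:ℝ), K u := by
        rw [Measure.restrict_smul, lintegral_smul_measure, abs_of_nonneg (inv_nonneg.2 hc.le), smul_eq_mul]

lemma lintegral_Ioi_half (G : ℝ → ℝ≥0∞) (hG : Measurable G) :
    ∫⁻ t in Set.Ioi (0:ℝ), G (t/2) / ENNReal.ofReal t
      = ∫⁻ u in Set.Ioi (0:ℝ), G u / ENNReal.ofReal u := by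
  set K : ℝ → ℝ≥0∞ := fun u => G u / ENNReal.ofReal (2*u) with hKdef
  have hKm : Measurable K :=
    hG.div (ENNReal.measurable_ofReal.comp (measurable_const_mul 2))
  have h1 : ∀ t : ℝ, G (t/2) / ENNReal.ofReal t = K (2⁻¹ * t) := by
    intro t
    have e1 : (2:ℝ) * (2⁻¹ * t) = t := by ring
    have e2 : (2:ℝ)⁻¹ * t = t / 2 := by ring
    rw [hKdef]; simp only [e2]; rw [show (2:ℝ) * (t/2) = t by ring]
  calc ∫⁻ t in Set.Ioi (0:ℝ), G (t/2) / ENNReal.ofReal t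
      = ∫⁻ t in Set.Ioi (0:ℝ), K (2⁻¹ * t) := by
        refine lintegral_congr fun t => h1 t
    _ = ENNReal.ofReal ((2:ℝ)⁻¹)⁻¹ * ∫⁻ u in Set.Ioi (0:ℝ), K u :=
        lintegral_Ioi_scale (by norm_num) K hKm
    _ = 2 * ∫⁻ u in Set.Ioi (0:ℝ), G u / ENNReal.ofReal (2*u) := by norm_num [hKdef]
    _ = 2 * ∫⁻ u in Set.Ioi (0:ℝ), 2⁻¹ * (G u / ENNReal.ofReal u) := by
        congr 1
        refine setLIntegral_congr_fun measurableSet_Ioi ?_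
        intro u hu
        show G u / ENNReal.ofReal (2*u) = 2⁻¹ * (G u / ENNReal.ofReal u)
        have h2 : ENNReal.ofReal (2*u) = 2 * ENNReal.ofReal u := by
          rw [ENNReal.ofReal_mul (by norm_num : (0:ℝ) ≤ 2)]
          norm_num
        rw [h2, div_eq_mul_inv, ENNReal.mul_inv (Or.inl (by norm_num)) (Or.inl (by norm_num)),
          div_eq_mul_inv]
        ring
    _ = ∫⁻ u in Set.Ioi (0:ℝ), G u / ENNReal.ofReal u := by
        rw [lintegral_const_mul (f := fun u => G u / ENNReal.ofReal u) 2⁻¹ (hG.div ENNReal.measurable_ofReal), ← mul_assoc,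
          ENNReal.mul_inv_cancel (by norm_num) (by norm_num), one_mul]



lemma toReal_inv_sum {a b c : ℝ≥0∞} (hb : 1 ≤ b) (hc : 1 ≤ c)
    (h : 1/a = 1/b + 1/c) : a.toReal⁻¹ = b.toReal⁻¹ + c.toReal⁻¹ := by
  have hb0 : b ≠ 0 := by rintro rfl; simp at hb
  have hc0 : c ≠ 0 := by rintro rfl; simp at hc
  have hbt : (1/b) ≠ ∞ := by simp [one_div, hb0]
  have hct : (1/c) ≠ ∞ := by simp [one_div, hc0]
  have h2 := congrArg ENNReal.toReal h
  rw [ENNReal.toReal_add hbt hct] at h2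
  simpa [one_div, ENNReal.toReal_inv] using h2

lemma toReal_pos' {a : ℝ≥0∞} (ha : 1 ≤ a) (ha' : a ≠ ∞) : 0 < a.toReal :=
  ENNReal.toReal_pos (by rintro rfl; simp at ha) ha'

lemma Jbound_sup (F₁ F₂ : ℝ → ℝ≥0∞) (hF₂ : Measurable F₂) {r : ℝ} (hr : 0 ≤ r)
    (A : ℝ≥0∞) (hA : ∀ u ∈ Set.Ioi (0:ℝ), F₁ u ≤ A) :
    ∫⁻ u in Set.Ioi (0:ℝ), (F₁ u * F₂ u)^r / ENNReal.ofReal u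
      ≤ A^r * ∫⁻ u in Set.Ioi (0:ℝ), (F₂ u)^r / ENNReal.ofReal u := by
  calc ∫⁻ u in Set.Ioi (0:ℝ), (F₁ u * F₂ u)^r / ENNReal.ofReal u
      ≤ ∫⁻ u in Set.Ioi (0:ℝ), A^r * ((F₂ u)^r / ENNReal.ofReal u) := by
        refine setLIntegral_mono' measurableSet_Ioi fun u hu => ?_
        rw [← mul_div_assoc, ← ENNReal.mul_rpow_of_nonneg _ _ hr]
        gcongr
        exact hA u hu
    _ = A^r * ∫⁻ u in Set.Ioi (0:ℝ), (F₂ u)^r / ENNReal.ofReal u :=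
        lintegral_const_mul'' _ (by fun_prop)

lemma norm_ineq (q q₁ q₂ : ℝ≥0∞) (hq : 1 ≤ q) (hq1 : 1 ≤ q₁) (hq2 : 1 ≤ q₂)
    (hqe : 1/q = 1/q₁ + 1/q₂)
    (F F₁ F₂ : ℝ → ℝ≥0∞) (hF₁m : Measurable F₁) (hF₂m : Measurable F₂)
    (hkey : ∀ t ∈ Set.Ioi (0:ℝ), F t ≤ ENNReal.ofReal 2 * (F₁ (t/2) * F₂ (t/2))) :
    (if q = ∞ then ⨆ t ∈ Set.Ioi (0:ℝ), F t
     else (∫⁻ t in Set.Ioi (0:ℝ), (F t)^q.toReal / ENNReal.ofReal t) ^ q.toReal⁻¹)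
    ≤ ENNReal.ofReal 2 *
      (if q₁ = ∞ then ⨆ t ∈ Set.Ioi (0:ℝ), F₁ t
       else (∫⁻ t in Set.Ioi (0:ℝ), (F₁ t)^q₁.toReal / ENNReal.ofReal t) ^ q₁.toReal⁻¹) *
      (if q₂ = ∞ then ⨆ t ∈ Set.Ioi (0:ℝ), F₂ t
       else (∫⁻ t in Set.Ioi (0:ℝ), (F₂ t)^q₂.toReal / ENNReal.ofReal t) ^ q₂.toReal⁻¹) := by
  have half_mem : ∀ t : ℝ, t ∈ Set.Ioi (0:ℝ) → t/2 ∈ Set.Ioi (0:ℝ) := by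
    intro t ht; simp only [Set.mem_Ioi] at *; linarith
  rcases eq_or_ne q ∞ with hqtop | hqtop
  · -- q = ∞ : then q₁ = q₂ = ∞
    subst hqtop
    have h0 : (1:ℝ≥0∞)/q₁ = 0 ∧ (1:ℝ≥0∞)/q₂ = 0 := by
      rw [← add_eq_zero]; simpa using hqe.symm
    have hq1t : q₁ = ∞ := by simpa [one_div, ENNReal.inv_eq_zero] using h0.1
    have hq2t : q₂ = ∞ := by simpa [one_div, ENNReal.inv_eq_zero] using h0.2
    subst hq1t; subst hq2t
    simp only [if_pos rfl]
    refine iSup₂_le fun t ht => ?_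
    refine le_trans (hkey t ht) ?_
    rw [mul_assoc]
    refine mul_le_mul' le_rfl (mul_le_mul' ?_ ?_)
    · exact le_iSup₂ (f := fun t _ => F₁ t) (t/2) (half_mem t ht)
    · exact le_iSup₂ (f := fun t _ => F₂ t) (t/2) (half_mem t ht)
  · -- q finite
    have hqr : 0 < q.toReal := toReal_pos' hq hqtop
    set J : ℝ≥0∞ := ∫⁻ u in Set.Ioi (0:ℝ), (F₁ u * F₂ u)^q.toReal / ENNReal.ofReal u with hJ
    have step1 : ∫⁻ t in Set.Ioi (0:ℝ), (F t)^q.toReal / ENNReal.ofReal t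
        ≤ (2:ℝ≥0∞)^q.toReal * J := by
      calc ∫⁻ t in Set.Ioi (0:ℝ), (F t)^q.toReal / ENNReal.ofReal t
          ≤ ∫⁻ t in Set.Ioi (0:ℝ),
              (ENNReal.ofReal 2 * (F₁ (t/2) * F₂ (t/2)))^q.toReal / ENNReal.ofReal t := by
            refine setLIntegral_mono' measurableSet_Ioi fun t ht => ?_
            gcongr
            exact hkey t ht
        _ = ∫⁻ t in Set.Ioi (0:ℝ),
              (2:ℝ≥0∞)^q.toReal * ((F₁ (t/2) * F₂ (t/2))^q.toReal / ENNReal.ofReal t) := by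
            refine lintegral_congr fun t => ?_
            rw [ENNReal.mul_rpow_of_nonneg _ _ ENNReal.toReal_nonneg,
              show (ENNReal.ofReal 2) = (2:ℝ≥0∞) by norm_num, mul_div_assoc]
        _ = (2:ℝ≥0∞)^q.toReal *
              ∫⁻ t in Set.Ioi (0:ℝ), (F₁ (t/2) * F₂ (t/2))^q.toReal / ENNReal.ofReal t :=
            lintegral_const_mul' _ _ (ENNReal.rpow_ne_top_of_nonneg ENNReal.toReal_nonneg
              (by norm_num))
        _ = (2:ℝ≥0∞)^q.toReal * J := by
            rw [hJ, ← lintegral_Ioi_half (fun u => (F₁ u * F₂ u)^q.toReal) (by fun_prop)]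
    have step2 : J ^ q.toReal⁻¹ ≤
        (if q₁ = ∞ then ⨆ t ∈ Set.Ioi (0:ℝ), F₁ t
         else (∫⁻ t in Set.Ioi (0:ℝ), (F₁ t)^q₁.toReal / ENNReal.ofReal t) ^ q₁.toReal⁻¹) *
        (if q₂ = ∞ then ⨆ t ∈ Set.Ioi (0:ℝ), F₂ t
         else (∫⁻ t in Set.Ioi (0:ℝ), (F₂ t)^q₂.toReal / ENNReal.ofReal t) ^ q₂.toReal⁻¹) := by
      rcases eq_or_ne q₁ ∞ with hq1t | hq1t
      · -- q₁ = ∞, so q₂ = q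
        subst hq1t
        have hqq2 : q = q₂ := by
          have hi : q⁻¹ = q₂⁻¹ := by simpa [one_div] using hqe
          simpa using congrArg (·⁻¹) hi
        subst hqq2
        rw [if_pos rfl, if_neg hqtop]
        set A := ⨆ t ∈ Set.Ioi (0:ℝ), F₁ t with hA
        have hJb : J ≤ A ^ q.toReal * ∫⁻ u in Set.Ioi (0:ℝ), (F₂ u)^q.toReal / ENNReal.ofReal u :=
          Jbound_sup F₁ F₂ hF₂m ENNReal.toReal_nonneg A
            (fun u hu => le_iSup₂ (f := fun t _ => F₁ t) u hu)
        calc J ^ q.toReal⁻¹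
            ≤ (A ^ q.toReal * ∫⁻ u in Set.Ioi (0:ℝ), (F₂ u)^q.toReal / ENNReal.ofReal u)
              ^ q.toReal⁻¹ := ENNReal.rpow_le_rpow hJb (by positivity)
          _ = A * (∫⁻ u in Set.Ioi (0:ℝ), (F₂ u)^q.toReal / ENNReal.ofReal u) ^ q.toReal⁻¹ := by
              rw [ENNReal.mul_rpow_of_nonneg _ _ (by positivity), ← ENNReal.rpow_mul,
                mul_inv_cancel₀ hqr.ne', ENNReal.rpow_one]
      · rcases eq_or_ne q₂ ∞ with hq2t | hq2t
        · -- q₂ = ∞, so q₁ = q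
          subst hq2t
          have hqq1 : q = q₁ := by
            have hi : q⁻¹ = q₁⁻¹ := by simpa [one_div] using hqe
            simpa using congrArg (·⁻¹) hi
          subst hqq1
          rw [if_pos rfl, if_neg hqtop]
          set A := ⨆ t ∈ Set.Ioi (0:ℝ), F₂ t with hA
          have hJ' : J = ∫⁻ u in Set.Ioi (0:ℝ), (F₂ u * F₁ u)^q.toReal / ENNReal.ofReal u := by
            rw [hJ]; exact lintegral_congr fun u => by rw [mul_comm (F₁ u)]
          have hJb : J ≤ A ^ q.toReal *
              ∫⁻ u in Set.Ioi (0:ℝ), (F₁ u)^q.toReal / ENNReal.ofReal u := by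
            rw [hJ']
            exact Jbound_sup F₂ F₁ hF₁m ENNReal.toReal_nonneg A
              (fun u hu => le_iSup₂ (f := fun t _ => F₂ t) u hu)
          calc J ^ q.toReal⁻¹
              ≤ (A ^ q.toReal * ∫⁻ u in Set.Ioi (0:ℝ), (F₁ u)^q.toReal / ENNReal.ofReal u)
                ^ q.toReal⁻¹ := ENNReal.rpow_le_rpow hJb (by positivity)
            _ = (∫⁻ u in Set.Ioi (0:ℝ), (F₁ u)^q.toReal / ENNReal.ofReal u) ^ q.toReal⁻¹ * A := by
                rw [ENNReal.mul_rpow_of_nonneg _ _ (by positivity), ← ENNReal.rpow_mul,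
                  mul_inv_cancel₀ hqr.ne', ENNReal.rpow_one, mul_comm]
        · -- both finite : Hölder
          rw [if_neg hq1t, if_neg hq2t]
          have hq1r : 0 < q₁.toReal := toReal_pos' hq1 hq1t
          have hq2r : 0 < q₂.toReal := toReal_pos' hq2 hq2t
          have hqsum : q.toReal⁻¹ = q₁.toReal⁻¹ + q₂.toReal⁻¹ := toReal_inv_sum hq1 hq2 hqe
          have hqlt1 : q.toReal < q₁.toReal := by
            have h1 : q₁⁻¹ < q⁻¹ := by
              rw [one_div, one_div, one_div] at hqe
              rw [hqe]
              refine ENNReal.lt_add_right ?_ ?_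
              · simp [ENNReal.inv_ne_top]
                rintro rfl; simp at hq1
              · simpa [ENNReal.inv_ne_zero] using hq2t
            have := ENNReal.inv_lt_inv.mp h1
            exact (ENNReal.toReal_lt_toReal hqtop hq1t).mpr this
          set r : ℝ := q₁.toReal / q.toReal with hr
          set r' : ℝ := q₂.toReal / q.toReal with hr'
          have hconj : r.HolderConjugate r' := by
            refine Real.holderConjugate_iff.mpr ⟨?_, ?_⟩
            · rw [hr]; exact (one_lt_div hqr).mpr hqlt1
            · rw [hr, hr', inv_div, inv_div, div_eq_mul_inv, div_eq_mul_inv, ← mul_add,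
                ← hqsum, mul_inv_cancel₀ hqr.ne']
          set ν : Measure ℝ :=
            (volume.restrict (Set.Ioi (0:ℝ))).withDensity (fun t => (ENNReal.ofReal t)⁻¹)
            with hν
          have hconv : ∀ (h : ℝ → ℝ≥0∞), Measurable h →
              ∫⁻ t in Set.Ioi (0:ℝ), h t / ENNReal.ofReal t = ∫⁻ t, h t ∂ν := by
            intro h hh
            rw [hν, lintegral_withDensity_eq_lintegral_mul _ (f := fun t : ℝ => (ENNReal.ofReal t)⁻¹)
              (Measurable.inv ENNReal.measurable_ofReal) hh]
            exact lintegral_congr fun t => by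
              simp [div_eq_mul_inv, mul_comm]
          have hH := ENNReal.lintegral_mul_le_Lp_mul_Lq ν hconj
            (f := fun t => (F₁ t) ^ q.toReal) (g := fun t => (F₂ t) ^ q.toReal)
            (by fun_prop) (by fun_prop)
          have hqr1 : q.toReal * r = q₁.toReal := by
            rw [hr]; field_simp
          have hqr2 : q.toReal * r' = q₂.toReal := by
            rw [hr']; field_simp
          have hJle : J ≤
              (∫⁻ t in Set.Ioi (0:ℝ), (F₁ t)^q₁.toReal / ENNReal.ofReal t) ^ (1/r) *
              (∫⁻ t in Set.Ioi (0:ℝ), (F₂ t)^q₂.toReal / ENNReal.ofReal t) ^ (1/r') := by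
            have e1 : ∫⁻ t in Set.Ioi (0:ℝ), (F₁ t)^q₁.toReal / ENNReal.ofReal t
                = ∫⁻ t, ((F₁ t) ^ q.toReal) ^ r ∂ν := by
              rw [hconv _ (by fun_prop)]
              exact lintegral_congr fun t => by rw [← ENNReal.rpow_mul, hqr1]
            have e2 : ∫⁻ t in Set.Ioi (0:ℝ), (F₂ t)^q₂.toReal / ENNReal.ofReal t
                = ∫⁻ t, ((F₂ t) ^ q.toReal) ^ r' ∂ν := by
              rw [hconv _ (by fun_prop)]
              exact lintegral_congr fun t => by rw [← ENNReal.rpow_mul, hqr2]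
            have e0 : J = ∫⁻ t, ((F₁ t) ^ q.toReal) * ((F₂ t) ^ q.toReal) ∂ν := by
              rw [hJ, hconv _ (by fun_prop)]
              exact lintegral_congr fun t =>
                by rw [ENNReal.mul_rpow_of_nonneg _ _ ENNReal.toReal_nonneg]
            rw [e0, e1, e2]
            exact hH
          calc J ^ q.toReal⁻¹
              ≤ ((∫⁻ t in Set.Ioi (0:ℝ), (F₁ t)^q₁.toReal / ENNReal.ofReal t) ^ (1/r) *
                (∫⁻ t in Set.Ioi (0:ℝ), (F₂ t)^q₂.toReal / ENNReal.ofReal t) ^ (1/r'))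
                ^ q.toReal⁻¹ := ENNReal.rpow_le_rpow hJle (by positivity)
            _ = (∫⁻ t in Set.Ioi (0:ℝ), (F₁ t)^q₁.toReal / ENNReal.ofReal t) ^ q₁.toReal⁻¹ *
                (∫⁻ t in Set.Ioi (0:ℝ), (F₂ t)^q₂.toReal / ENNReal.ofReal t) ^ q₂.toReal⁻¹ := by
                rw [ENNReal.mul_rpow_of_nonneg _ _ (by positivity), ← ENNReal.rpow_mul,
                  ← ENNReal.rpow_mul]
                congr 1
                · congr 1
                  rw [hr]; field_simp
                · congr 1
                  rw [hr']; field_simp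
    rw [if_neg hqtop]
    calc (∫⁻ t in Set.Ioi (0:ℝ), (F t)^q.toReal / ENNReal.ofReal t) ^ q.toReal⁻¹
        ≤ ((2:ℝ≥0∞)^q.toReal * J) ^ q.toReal⁻¹ :=
          ENNReal.rpow_le_rpow step1 (by positivity)
      _ = 2 * J ^ q.toReal⁻¹ := by
          rw [ENNReal.mul_rpow_of_nonneg _ _ (by positivity), ← ENNReal.rpow_mul,
            mul_inv_cancel₀ hqr.ne', ENNReal.rpow_one]
      _ ≤ 2 * (_ * _) := mul_le_mul' le_rfl step2
      _ = ENNReal.ofReal 2 * _ * _ := by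
          rw [show (ENNReal.ofReal 2) = (2:ℝ≥0∞) by norm_num, mul_assoc]

/-- O'Neil's inequality: if `1/p = 1/p₁ + 1/p₂` and `1/q = 1/q₁ + 1/q₂` with all exponents in
`[1,∞]`, then on any σ-finite measure space, `‖fg‖_{L^{p,q}} ≤ C ‖f‖_{L^{p₁,q₁}} ‖g‖_{L^{p₂,q₂}}`. -/
theorem oneil_inequality (p p₁ p₂ q q₁ q₂ : ℝ≥0∞)
    (hp : 1 ≤ p) (hp1 : 1 ≤ p₁) (hp2 : 1 ≤ p₂)
    (hq : 1 ≤ q) (hq1 : 1 ≤ q₁) (hq2 : 1 ≤ q₂)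
    (hpe : 1 / p = 1 / p₁ + 1 / p₂) (hqe : 1 / q = 1 / q₁ + 1 / q₂) :
    ∃ C : ℝ, 0 < C ∧
      ∀ (α : Type) [MeasurableSpace α] (μ : Measure α) [SigmaFinite μ],
        ∀ f g : α → ℝ, Measurable f → Measurable g →
          lorentzNorm μ (fun x => f x * g x) p q ≤
            ENNReal.ofReal C * lorentzNorm μ f p₁ q₁ * lorentzNorm μ g p₂ q₂ := by
  refine ⟨2, by norm_num, ?_⟩
  intro α _ μ _ f g hf hg
  have hpsum : p.toReal⁻¹ = p₁.toReal⁻¹ + p₂.toReal⁻¹ := toReal_inv_sum hp1 hp2 hpe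
  have hple : p.toReal⁻¹ ≤ 1 := by
    rcases eq_or_ne p ∞ with h | h
    · simp [h]
    · exact inv_le_one_of_one_le₀ (by simpa using ENNReal.toReal_mono h hp)
  have key : ∀ t ∈ Set.Ioi (0:ℝ),
      ENNReal.ofReal (t ^ p.toReal⁻¹) * decRearr μ (fun x => f x * g x) t ≤
        ENNReal.ofReal 2 *
          ((ENNReal.ofReal ((t/2) ^ p₁.toReal⁻¹) * decRearr μ f (t/2)) *
           (ENNReal.ofReal ((t/2) ^ p₂.toReal⁻¹) * decRearr μ g (t/2))) := by
    intro t ht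
    rw [Set.mem_Ioi] at ht
    have ht2 : (0:ℝ) < t/2 := by linarith
    have hd : decRearr μ (fun x => f x * g x) t ≤ decRearr μ f (t/2) * decRearr μ g (t/2) := by
      have h := decRearr_mul_le μ f g ht2.le ht2.le
      rwa [show t/2 + t/2 = t by ring] at h
    have hexp : t ^ p.toReal⁻¹
        = 2 ^ p.toReal⁻¹ * ((t/2) ^ p₁.toReal⁻¹ * (t/2) ^ p₂.toReal⁻¹) := by
      rw [← Real.rpow_add ht2, ← hpsum, ← Real.mul_rpow (by norm_num) ht2.le,
        show (2:ℝ)*(t/2) = t by ring]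
    have h2e : (2:ℝ) ^ p.toReal⁻¹ ≤ 2 := by
      calc (2:ℝ) ^ p.toReal⁻¹ ≤ 2 ^ (1:ℝ) :=
            Real.rpow_le_rpow_of_exponent_le one_le_two hple
        _ = 2 := Real.rpow_one 2
    calc ENNReal.ofReal (t ^ p.toReal⁻¹) * decRearr μ (fun x => f x * g x) t
        ≤ ENNReal.ofReal (2 ^ p.toReal⁻¹ * ((t/2) ^ p₁.toReal⁻¹ * (t/2) ^ p₂.toReal⁻¹)) *
            (decRearr μ f (t/2) * decRearr μ g (t/2)) := by
          rw [← hexp]; exact mul_le_mul' le_rfl hd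
      _ = ENNReal.ofReal (2 ^ p.toReal⁻¹) *
            ((ENNReal.ofReal ((t/2) ^ p₁.toReal⁻¹) * decRearr μ f (t/2)) *
             (ENNReal.ofReal ((t/2) ^ p₂.toReal⁻¹) * decRearr μ g (t/2))) := by
          rw [ENNReal.ofReal_mul (by positivity), ENNReal.ofReal_mul (by positivity)]
          ring
      _ ≤ ENNReal.ofReal 2 *
            ((ENNReal.ofReal ((t/2) ^ p₁.toReal⁻¹) * decRearr μ f (t/2)) *
             (ENNReal.ofReal ((t/2) ^ p₂.toReal⁻¹) * decRearr μ g (t/2))) :=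
          mul_le_mul' (ENNReal.ofReal_le_ofReal h2e) le_rfl
  have hF₁m : Measurable (fun t => ENNReal.ofReal (t ^ p₁.toReal⁻¹) * decRearr μ f t) :=
    (ENNReal.measurable_ofReal.comp (by fun_prop)).mul (decRearr_measurable μ f)
  have hF₂m : Measurable (fun t => ENNReal.ofReal (t ^ p₂.toReal⁻¹) * decRearr μ g t) :=
    (ENNReal.measurable_ofReal.comp (by fun_prop)).mul (decRearr_measurable μ g)
  have main := norm_ineq q q₁ q₂ hq hq1 hq2 hqe
    (fun t => ENNReal.ofReal (t ^ p.toReal⁻¹) * decRearr μ (fun x => f x * g x) t)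
    (fun t => ENNReal.ofReal (t ^ p₁.toReal⁻¹) * decRearr μ f t)
    (fun t => ENNReal.ofReal (t ^ p₂.toReal⁻¹) * decRearr μ g t)
    hF₁m hF₂m key
  simpa only [lorentzNorm] using main
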